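/- Let T be the slope function of the confocal conic family with foci (±1,0) and define S = 2T/(1−T²) (where T² ≠ 1). Then S is the slope function of the bipolar coordinate net with the same foci; i.e., the tangent direction of the circles of the elliptic Apollonian pencil through the foci (±1,0) at the point (x,y) annihilates the form S dx + dy, and S = 2T/(1−T²) expresses the doубling-angle relation between the tangent directions of the confocal net and the bipolar net. -/

import Mathlib

/-- Let `T` be (minus) the slope of the conic of the confocal family with foci
`(±1,0)` (so `a² − b² = 1`) through `(x,y)`, i.e. `T = x(b²−λ)/(y(a²−λ))` with
`x²/(a²−λ) + y²/(b²−λ) = 1`.  Then `S = 2T/(1−T²)` (the doubled-angle slope)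
equals the slope function `2xy/(1 + y² − x²)` of the elliptic Apollonian pencil
of circles through the foci `(±1,0)`: the tangent direction of the circle of
the pencil through `(x,y)` annihilates `S dx + dy`. -/
theorem bipolar_slope_relation (a b lam x y T : ℝ) (hfoci : a ^ 2 - b ^ 2 = 1)
    (hda : a ^ 2 - lam ≠ 0) (hdb : b ^ 2 - lam ≠ 0) (hy : y ≠ 0)
    (hinc : x ^ 2 / (a ^ 2 - lam) + y ^ 2 / (b ^ 2 - lam) = 1)
    (hT : T = x * (b ^ 2 - lam) / (y * (a ^ 2 - lam)))
    (hT1 : T ^ 2 ≠ 1) (hden : x ^ 2 - y ^ 2 - 1 ≠ 0) :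
    2 * T / (1 - T ^ 2) = 2 * x * y / (1 + y ^ 2 - x ^ 2) := by
  have hinc' : x ^ 2 * (b ^ 2 - lam) + y ^ 2 * (a ^ 2 - lam)
      = (a ^ 2 - lam) * (b ^ 2 - lam) := by
    field_simp at hinc; linarith [hinc]
  have key : (y * (a ^ 2 - lam)) ^ 2 - (x * (b ^ 2 - lam)) ^ 2
      = (a ^ 2 - lam) * (b ^ 2 - lam) * (1 + y ^ 2 - x ^ 2) := by
    linear_combination ((a ^ 2 - lam) * (b ^ 2 - lam)) * hfoci
      + (a ^ 2 - b ^ 2) * hinc'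
  have h1 : 1 - T ^ 2 ≠ 0 := by intro h; apply hT1; linarith
  have h2 : (1 : ℝ) + y ^ 2 - x ^ 2 ≠ 0 := by intro h; apply hden; linarith
  have hyA : y * (a ^ 2 - lam) ≠ 0 := mul_ne_zero hy hda
  have e1 : 1 - T ^ 2
      = (a ^ 2 - lam) * (b ^ 2 - lam) * (1 + y ^ 2 - x ^ 2) / (y * (a ^ 2 - lam)) ^ 2 := by
    rw [hT, eq_div_iff (pow_ne_zero 2 hyA)]
    field_simp
    linear_combination key
  rw [e1, hT]
  rw [div_eq_div_iff (by rw [e1] at h1; exact h1) h2]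
  field_simp
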